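/- Let X be a real Hilbert space and let f : X → ℝ∪{+∞} be a proper lower semicontinuous paraconvex function. Then for every x in the interior of dom(f), the set ∂_lsc f(x) is nonempty. -/

import Mathlib

open scoped RealInnerProductSpace

noncomputable section

/-- The class `Φ_lsc` of continuous functions `x ↦ -a‖x‖² + ⟪v,x⟫ + c` with `a ≥ 0`. -/
def PhiLsc (X : Type*) [NormedAddCommGroup X] [InnerProductSpace ℝ X] : Set (X → ℝ) :=
  {φ | ∃ a : ℝ, ∃ v : X, ∃ c : ℝ, 0 ≤ a ∧ ∀ x, φ x = -a * ‖x‖ ^ 2 + ⟪v, x⟫ + c}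

/-- The support set `supp(f) = {φ ∈ Φ_lsc : φ ≤ f}` of `f : X → ℝ∪{+∞}`. -/
def PhiSupp {X : Type*} [NormedAddCommGroup X] [InnerProductSpace ℝ X] (f : X → EReal) :
    Set (X → ℝ) :=
  {φ | φ ∈ PhiLsc X ∧ ∀ x, (φ x : EReal) ≤ f x}

/-- The effective domain of `f`. -/
def PhiDom {X : Type*} (f : X → EReal) : Set X := {x | f x < ⊤}

/-- `f` is `Φ_lsc`-convex: it is the pointwise supremum of its support set. -/
def PhiConvexOn {X : Type*} [NormedAddCommGroup X] [InnerProductSpace ℝ X] (f : X → EReal) :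
    Prop :=
  ∀ x, f x = ⨆ φ ∈ PhiSupp f, (φ x : EReal)

/-- The set of `ε`-`Φ_lsc`-subgradients of `f` at `xb`:
pairs `(a,v)`, `a ≥ 0`, with `f x - f xb ≥ ⟪v, x - xb⟫ - a‖x‖² + a‖xb‖² - ε` for all `x`. -/
def SubLscE {X : Type*} [NormedAddCommGroup X] [InnerProductSpace ℝ X] (f : X → EReal)
    (ε : ℝ) (xb : X) : Set (ℝ × X) :=
  {p | 0 ≤ p.1 ∧ ∀ x : X,
    f xb + ((⟪p.2, x - xb⟫ - p.1 * ‖x‖ ^ 2 + p.1 * ‖xb‖ ^ 2 - ε : ℝ) : EReal) ≤ f x}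

/-- The set of local `Φ_lsc`-subgradients of `f` at `xb`. -/
def SubLscLoc {X : Type*} [NormedAddCommGroup X] [InnerProductSpace ℝ X] (f : X → EReal)
    (xb : X) : Set (ℝ × X) :=
  {p | 0 ≤ p.1 ∧ ∃ δ : ℝ, 0 < δ ∧ ∀ x : X, ‖x - xb‖ < δ →
    f xb + ((⟪p.2, x - xb⟫ - p.1 * ‖x‖ ^ 2 + p.1 * ‖xb‖ ^ 2 : ℝ) : EReal) ≤ f x}

/-- `f` is paraconvex (with exponent 2). -/
def ParaconvexOn {X : Type*} [NormedAddCommGroup X] [InnerProductSpace ℝ X]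
    (f : X → EReal) : Prop :=
  ∃ C : ℝ, 0 < C ∧ ∀ x y : X, ∀ t : ℝ, t ∈ Set.Icc (0 : ℝ) 1 →
    f (t • x + (1 - t) • y) ≤
      (t : EReal) * f x + ((1 - t : ℝ) : EReal) * f y + ((C * ‖x - y‖ ^ 2 : ℝ) : EReal)

/-- The proximal subdifferential of `f` at `xb`. -/
def ProxSub {X : Type*} [NormedAddCommGroup X] [InnerProductSpace ℝ X] (f : X → EReal)
    (xb : X) : Set X :=
  {v | ∃ δ : ℝ, 0 < δ ∧ ∃ ρ : ℝ, 0 ≤ ρ ∧ ∀ x : X, ‖x - xb‖ < δ →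
    f xb + ((⟪v, x - xb⟫ - ρ / 2 * ‖x - xb‖ ^ 2 : ℝ) : EReal) ≤ f x}

/-- The Dini subdifferential of `f` at `xb`. -/
def DiniSub {X : Type*} [NormedAddCommGroup X] [InnerProductSpace ℝ X] (f : X → EReal)
    (xb : X) : Set X :=
  {w | ∀ h : X, ∀ t : ℕ → ℝ, ∀ u : ℕ → X, (∀ n, 0 < t n) →
    Filter.Tendsto t Filter.atTop (nhds 0) → Filter.Tendsto u Filter.atTop (nhds h) →
    ((⟪w, h⟫ : ℝ) : EReal) ≤
      Filter.liminf (fun n => (f (xb + t n • u n) - f xb) * (((t n)⁻¹ : ℝ) : EReal)) Filter.atTop}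

/-- The `Φ_lsc`-subgradients of a real-valued `f` at `xb`. -/
def SubLscR {X : Type*} [NormedAddCommGroup X] [InnerProductSpace ℝ X] (f : X → ℝ)
    (xb : X) : Set (ℝ × X) :=
  {p | 0 ≤ p.1 ∧ ∀ x : X,
    ⟪p.2, x - xb⟫ - p.1 * ‖x‖ ^ 2 + p.1 * ‖xb‖ ^ 2 ≤ f x - f xb}

open Metric in

lemma aux_midpoint_convexOn {X : Type*} [NormedAddCommGroup X] [NormedSpace ℝ X]
    {s : Set X} (hs : Convex ℝ s) {F : X → ℝ} {M : ℝ} (hbd : ∀ x ∈ s, F x ≤ M)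
    (hmid : ∀ x ∈ s, ∀ y ∈ s, F ((1/2 : ℝ) • x + (1/2 : ℝ) • y) ≤ (F x + F y) / 2) :
    ConvexOn ℝ s F := by
  refine ⟨hs, fun x hx y hy a b ha hb hab => ?_⟩
  set φ : ℝ → ℝ := fun t => F (x + t • (y - x)) - ((1 - t) * F x + t * F y) with hφ
  have hpt : ∀ t : ℝ, t ∈ Set.Icc (0:ℝ) 1 → x + t • (y - x) ∈ s := by
    intro t ht
    have : x + t • (y - x) = (1 - t) • x + t • y := by module
    rw [this]
    exact hs hx hy (by linarith [ht.2]) ht.1 (by ring)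
  have hφmid : ∀ t1 ∈ Set.Icc (0:ℝ) 1, ∀ t2 ∈ Set.Icc (0:ℝ) 1,
      φ ((t1 + t2) / 2) ≤ (φ t1 + φ t2) / 2 := by
    intro t1 ht1 t2 ht2
    have hpteq : x + ((t1 + t2) / 2) • (y - x)
        = (1/2 : ℝ) • (x + t1 • (y - x)) + (1/2 : ℝ) • (x + t2 • (y - x)) := by module
    have := hmid _ (hpt t1 ht1) _ (hpt t2 ht2)
    rw [← hpteq] at this
    simp only [hφ]
    nlinarith [this]
  have hφ0 : φ 0 = 0 := by simp [hφ]
  have hφ1 : φ 1 = 0 := by simp [hφ]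
  set D : ℝ := M + |F x| + |F y| with hD
  have hφbd : ∀ t ∈ Set.Icc (0:ℝ) 1, φ t ≤ D := by
    intro t ht
    have h1 := hbd _ (hpt t ht)
    have h2 : (1 - t) * F x + t * F y ≥ -(|F x| + |F y|) := by
      nlinarith [abs_nonneg (F x), abs_nonneg (F y), neg_abs_le (F x), neg_abs_le (F y),
        ht.1, ht.2]
    simp only [hφ]
    linarith
  have main : ∀ n : ℕ, ∀ t ∈ Set.Icc (0:ℝ) 1, φ t ≤ D / 2 ^ n := by
    intro n
    induction n with
    | zero => simpa using hφbd
    | succ n ih =>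
      intro t ht
      rcases le_or_gt t (1/2) with h | h
      · have h2t : (2 * t) ∈ Set.Icc (0:ℝ) 1 := ⟨by linarith [ht.1], by linarith⟩
        have harg : t = ((0 : ℝ) + 2 * t) / 2 := by ring
        have := hφmid 0 ⟨le_refl 0, zero_le_one⟩ (2 * t) h2t
        rw [← harg, hφ0] at this
        have h2 := ih (2 * t) h2t
        rw [pow_succ, ← div_div]
        linarith
      · have h2t : (2 * t - 1) ∈ Set.Icc (0:ℝ) 1 := ⟨by linarith, by linarith [ht.2]⟩
        have harg : t = ((2 * t - 1) + 1) / 2 := by ring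
        have := hφmid (2 * t - 1) h2t 1 ⟨zero_le_one, le_refl 1⟩
        rw [← harg, hφ1] at this
        have h2 := ih (2 * t - 1) h2t
        rw [pow_succ, ← div_div]
        linarith
  have hb1 : b ∈ Set.Icc (0:ℝ) 1 := ⟨hb, by linarith⟩
  have hφb : φ b ≤ 0 := by
    by_contra hpos
    push_neg at hpos
    obtain ⟨n, hn⟩ := pow_unbounded_of_one_lt (D / φ b) (by norm_num : (1:ℝ) < 2)
    have := main n b hb1
    have h2n : (0:ℝ) < 2 ^ n := by positivity
    rw [div_lt_iff₀ hpos] at hn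
    have : D / 2 ^ n < φ b := by rw [div_lt_iff₀ h2n]; linarith
    linarith [main n b hb1]
  have hcombo : a • x + b • y = x + b • (y - x) := by
    have : a = 1 - b := by linarith
    rw [this]; module
  rw [hcombo]
  have : a = 1 - b := by linarith
  simp only [hφ] at hφb
  rw [this]
  simp only [smul_eq_mul]
  linarith

open Metric in

lemma aux_exists_subgrad {X : Type*} [NormedAddCommGroup X] [InnerProductSpace ℝ X]
    [CompleteSpace X] {xb : X} {δ M : ℝ} (hδ : 0 < δ) {F : X → ℝ}
    (hconv : ConvexOn ℝ (ball xb δ) F) (hbd : ∀ x ∈ ball xb δ, F x ≤ M) :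
    ∃ v : X, ∀ x ∈ ball xb δ, ⟪v, x - xb⟫ ≤ F x - F xb := by
  have hxb : xb ∈ ball xb δ := mem_ball_self hδ
  set epi : Set (X × ℝ) := {p : X × ℝ | p.1 ∈ ball xb δ ∧ F p.1 ≤ p.2} with hepi
  have hconvepi : Convex ℝ epi := hconv.convex_epigraph
  have hMxb : F xb ≤ M := hbd xb hxb
  -- the open box in the epigraph
  have hbox : (ball xb δ) ×ˢ (Set.Ioi M) ⊆ epi := by
    rintro ⟨x, r⟩ ⟨hx, hr⟩
    exact ⟨hx, le_of_lt (lt_of_le_of_lt (hbd x hx) hr)⟩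
  have hboxopen : IsOpen ((ball xb δ) ×ˢ (Set.Ioi M)) := isOpen_ball.prod isOpen_Ioi
  have hw : ((xb, M + 1) : X × ℝ) ∈ interior epi :=
    interior_maximal hbox hboxopen ⟨hxb, by simp⟩
  set p0 : X × ℝ := (xb, F xb) with hp0
  have hp0epi : p0 ∈ epi := ⟨hxb, le_refl _⟩
  have hp0notin : p0 ∉ interior epi := by
    intro hmem
    rw [mem_interior_iff_mem_nhds, Metric.mem_nhds_iff] at hmem
    obtain ⟨ε, hε, hball⟩ := hmem
    have : ((xb, F xb - ε / 2) : X × ℝ) ∈ epi := by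
      apply hball
      rw [mem_ball]
      simp only [Prod.dist_eq, dist_self, p0]
      rw [Real.dist_eq]
      simp only [sub_sub_cancel_left, abs_neg]
      rw [abs_of_pos (by linarith)]
      simp [hε, half_lt_self]
    have := this.2
    simp only at this
    linarith
  obtain ⟨ℓ, hℓ⟩ := geometric_hahn_banach_open_point hconvepi.interior isOpen_interior hp0notin
  -- extend the strict inequality on the interior to ≤ on epi
  have hle : ∀ z ∈ epi, ℓ z ≤ ℓ p0 := by
    intro z hz
    by_contra hgt
    push_neg at hgt
    set w : X × ℝ := (xb, M + 1) with hwdef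
    set s : ℝ := ℓ z - ℓ p0 with hs
    have hspos : 0 < s := by simp [hs]; linarith
    set t : ℝ := min 1 (s / (2 * (|ℓ w - ℓ z| + 1))) with ht
    have htpos : 0 < t := by
      apply lt_min one_pos
      apply div_pos hspos
      positivity
    have ht1 : t ≤ 1 := min_le_left _ _
    have hcombo : t • w + (1 - t) • z ∈ interior epi :=
      hconvepi.combo_interior_self_mem_interior hw hz htpos (by linarith) (by ring)
    have hlt := hℓ _ hcombo
    rw [map_add, map_smul, map_smul, smul_eq_mul, smul_eq_mul] at hlt
    -- ℓ z + t * (ℓ w - ℓ z) > ℓ p0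
    have habs : t * |ℓ w - ℓ z| ≤ s / 2 := by
      have h1 : t ≤ s / (2 * (|ℓ w - ℓ z| + 1)) := min_le_right _ _
      have h2 : 0 ≤ |ℓ w - ℓ z| := abs_nonneg _
      have h3 : t * (|ℓ w - ℓ z| + 1) ≤ s / 2 := by
        calc t * (|ℓ w - ℓ z| + 1) ≤ (s / (2 * (|ℓ w - ℓ z| + 1))) * (|ℓ w - ℓ z| + 1) := by
              apply mul_le_mul_of_nonneg_right h1; linarith
          _ = s / 2 := by field_simp
      nlinarith
    have h4 : t * (ℓ w - ℓ z) ≥ -(s/2) := by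
      have := neg_abs_le (ℓ w - ℓ z)
      nlinarith [abs_nonneg (ℓ w - ℓ z), htpos]
    nlinarith [hlt]
  -- decompose ℓ
  set β : ℝ := ℓ ((0 : X), (1 : ℝ)) with hβ
  have hdecomp : ∀ x : X, ∀ r : ℝ, ℓ (x, r) = ℓ (x, 0) + r * β := by
    intro x r
    have : ((x, r) : X × ℝ) = (x, 0) + r • ((0 : X), (1 : ℝ)) := by
      simp [Prod.ext_iff]
    rw [this, map_add, map_smul, smul_eq_mul]
  have hβneg : β < 0 := by
    have h1 := hℓ _ hw
    rw [hdecomp xb (M + 1), hdecomp xb (F xb)] at h1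
    have h2 : M + 1 - F xb > 0 := by linarith
    nlinarith
  set L : X →L[ℝ] ℝ := ℓ.comp (ContinuousLinearMap.inl ℝ X ℝ) with hL
  set u : X := (InnerProductSpace.toDual ℝ X).symm L with hu
  have huinner : ∀ x : X, ⟪u, x⟫ = ℓ (x, 0) := by
    intro x
    rw [hu, InnerProductSpace.toDual_symm_apply]
    rfl
  refine ⟨(-β)⁻¹ • u, fun x hx => ?_⟩
  have hkey := hle (x, F x) ⟨hx, le_refl _⟩
  rw [hdecomp x (F x), hdecomp xb (F xb)] at hkey
  rw [inner_smul_left, inner_sub_right, huinner, huinner]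
  simp only [RCLike.conj_to_real, map_inv₀]
  have hβpos : 0 < -β := by linarith
  rw [inv_mul_le_iff₀ hβpos]
  nlinarith [hkey]

open Metric in

lemma aux_upper_bound {X : Type*} [NormedAddCommGroup X] [InnerProductSpace ℝ X]
    [CompleteSpace X] (f : X → EReal) (hbot : ∀ x, f x ≠ ⊥)
    (hlsc : LowerSemicontinuous f) {C : ℝ} (hC : 0 < C)
    (hmid : ∀ (x y : X) (px py : ℝ), f x ≤ (px : EReal) → f y ≤ (py : EReal) →
      f ((1/2 : ℝ) • x + (1/2 : ℝ) • y) ≤ (((px + py)/2 + C * ‖x - y‖ ^ 2 : ℝ) : EReal))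
    {xb : X} {r0 : ℝ} (hr0 : 0 < r0) (hK : closedBall xb r0 ⊆ {x | f x < ⊤}) :
    ∃ δ : ℝ, 0 < δ ∧ δ ≤ r0 ∧ ∃ M0 : ℝ, ∀ y ∈ ball xb δ, f y ≤ (M0 : EReal) := by
  set K := closedBall xb r0 with hKdef
  haveI : Nonempty K := ⟨⟨xb, mem_closedBall_self hr0.le⟩⟩
  haveI : CompleteSpace K := (isClosed_closedBall (x := xb) (ε := r0)).completeSpace_coe
  have hclosed : ∀ n : ℕ, IsClosed {y : K | f ↑y ≤ (((n : ℝ) : EReal))} := by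
    intro n
    have : {y : K | f ↑y ≤ (((n : ℝ) : EReal))} =
        Subtype.val ⁻¹' (f ⁻¹' Set.Iic (((n : ℝ) : EReal))) := rfl
    rw [this]
    exact (hlsc.isClosed_preimage _).preimage continuous_subtype_val
  have hcover : ⋃ n : ℕ, {y : K | f ↑y ≤ (((n : ℝ) : EReal))} = Set.univ := by
    ext y
    simp only [Set.mem_iUnion, Set.mem_setOf_eq, Set.mem_univ, iff_true]
    have hdom : f ↑y < ⊤ := hK y.2
    have hco : f ↑y = ((f ↑y).toReal : EReal) := (EReal.coe_toReal hdom.ne (hbot _)).symm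
    obtain ⟨n, hn⟩ := exists_nat_ge ((f ↑y).toReal)
    exact ⟨n, by rw [hco]; exact_mod_cast hn⟩
  obtain ⟨n, z, hz⟩ := nonempty_interior_of_iUnion_of_closed hclosed hcover
  rw [mem_interior_iff_mem_nhds, mem_nhds_subtype] at hz
  obtain ⟨t, htnhds, htsub⟩ := hz
  obtain ⟨ρ, hρ, hballt⟩ := Metric.mem_nhds_iff.1 htnhds
  have hsub : ∀ y : X, y ∈ ball (↑z : X) ρ → y ∈ K → f y ≤ (((n : ℝ) : EReal)) := by
    intro y hy hyK
    exact htsub (a := ⟨y, hyK⟩) (hballt hy)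
  -- move slightly towards the center xb to get a genuine ball
  have hxbint : xb ∈ interior K := by
    rw [hKdef, interior_closedBall xb (ne_of_gt hr0)]
    exact mem_ball_self hr0
  set tt : ℝ := min 1 (ρ / (2 * r0 + 2)) with htt
  have httpos : 0 < tt := lt_min one_pos (div_pos hρ (by linarith))
  have htt1 : tt ≤ 1 := min_le_left _ _
  set p : X := ↑z + tt • (xb - ↑z) with hp
  have hpint : p ∈ interior K :=
    (convex_closedBall xb r0).add_smul_sub_mem_interior z.2 hxbint ⟨httpos, htt1⟩
  have hpz : dist p ↑z < ρ / 2 := by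
    rw [dist_eq_norm, hp, add_sub_cancel_left, norm_smul, Real.norm_eq_abs,
      abs_of_pos httpos]
    have hzxb : ‖xb - (↑z : X)‖ ≤ r0 := by
      rw [norm_sub_rev, ← dist_eq_norm]
      exact mem_closedBall.1 z.2
    have h2 : tt ≤ ρ / (2 * r0 + 2) := min_le_right _ _
    have h3 : tt * ‖xb - (↑z : X)‖ ≤ (ρ / (2 * r0 + 2)) * r0 := by
      apply mul_le_mul h2 hzxb (norm_nonneg _) (by positivity)
    have h4 : (ρ / (2 * r0 + 2)) * r0 < ρ / 2 := by
      rw [div_mul_eq_mul_div, div_lt_div_iff₀ (by linarith) (by norm_num)]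
      nlinarith
    linarith
  obtain ⟨η1, hη1, hb1⟩ := Metric.mem_nhds_iff.1 (mem_interior_iff_mem_nhds.1 hpint)
  set η : ℝ := min η1 (ρ / 2) with hη
  have hηpos : 0 < η := lt_min hη1 (by linarith)
  have hup : ∀ y ∈ ball p η, f y ≤ (((n : ℝ) : EReal)) := by
    intro y hy
    have hyK : y ∈ K := hb1 (ball_subset_ball (min_le_left _ _) hy)
    have hyz : y ∈ ball (↑z : X) ρ := by
      rw [mem_ball] at hy ⊢
      have := dist_triangle y p ↑z
      have h2 : dist y p < ρ / 2 := lt_of_lt_of_le hy (min_le_right _ _)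
      linarith
    exact hsub y hyz hyK
  -- reflect p through xb
  set u : X := xb + (xb - p) with hu
  have hpK : p ∈ K := interior_subset hpint
  have hpxb : ‖p - xb‖ ≤ r0 := by
    have := hpK
    rw [hKdef, mem_closedBall, dist_eq_norm] at this
    exact this
  have huK : u ∈ K := by
    rw [hKdef, mem_closedBall, dist_eq_norm]
    have : u - xb = xb - p := by rw [hu]; abel
    rw [this, norm_sub_rev]
    exact hpxb
  have hudom : f u < ⊤ := hK huK
  have hucoe : f u ≤ (((f u).toReal : ℝ) : EReal) :=
    le_of_eq (EReal.coe_toReal hudom.ne (hbot _)).symm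
  refine ⟨min (η / 2) r0, lt_min (by linarith) hr0, min_le_right _ _,
    ((n : ℝ) + (f u).toReal) / 2 + C * (η + 2 * r0) ^ 2, ?_⟩
  intro y hy
  rw [mem_ball, dist_eq_norm] at hy
  have hyxb : ‖y - xb‖ < η / 2 := lt_of_lt_of_le hy (min_le_left _ _)
  set w : X := y + (y - u) with hw
  have hmidpt : (1/2 : ℝ) • w + (1/2 : ℝ) • u = y := by rw [hw]; module
  have hwp : w - p = (2 : ℝ) • (y - xb) := by rw [hw, hu]; module
  have hwball : w ∈ ball p η := by
    rw [mem_ball, dist_eq_norm, hwp, norm_smul, Real.norm_eq_abs]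
    rw [abs_of_pos (by norm_num : (0:ℝ) < 2)]
    linarith
  have h1 := hmid w u ((n : ℝ)) ((f u).toReal) (hup w hwball) hucoe
  rw [hmidpt] at h1
  refine le_trans h1 ?_
  rw [EReal.coe_le_coe_iff]
  have hwu : ‖w - u‖ ≤ 2 * ‖y - xb‖ + 2 * ‖p - xb‖ := by
    have hwu2 : w - u = (2:ℝ) • (y - xb) + (2:ℝ) • (xb - u) := by rw [hw]; module
    have hxbu : xb - u = p - xb := by rw [hu]; abel
    rw [hwu2, hxbu]
    calc ‖(2:ℝ) • (y - xb) + (2:ℝ) • (p - xb)‖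
        ≤ ‖(2:ℝ) • (y - xb)‖ + ‖(2:ℝ) • (p - xb)‖ := norm_add_le _ _
      _ = 2 * ‖y - xb‖ + 2 * ‖p - xb‖ := by
          rw [norm_smul, norm_smul, Real.norm_eq_abs, abs_of_pos (by norm_num : (0:ℝ) < 2)]
  have hwub : ‖w - u‖ ≤ η + 2 * r0 := by nlinarith
  have : C * ‖w - u‖ ^ 2 ≤ C * (η + 2 * r0) ^ 2 := by
    apply mul_le_mul_of_nonneg_left _ hC.le
    nlinarith [norm_nonneg (w - u)]
  linarith

open scoped RealInnerProductSpace in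
lemma aux_normid {X : Type*} [NormedAddCommGroup X] [InnerProductSpace ℝ X] (x y : X) :
    ‖(1/2 : ℝ) • x + (1/2 : ℝ) • y‖ ^ 2 = ‖x‖ ^ 2 / 2 + ‖y‖ ^ 2 / 2 - ‖x - y‖ ^ 2 / 4 := by
  have hsum : (1/2 : ℝ) • x + (1/2 : ℝ) • y = (1/2 : ℝ) • (x + y) := by module
  rw [hsum, norm_smul]
  have h1 : ‖x + y‖ ^ 2 = ‖x‖ ^ 2 + 2 * ⟪x, y⟫ + ‖y‖ ^ 2 := norm_add_sq_real x y
  have h2 : ‖x - y‖ ^ 2 = ‖x‖ ^ 2 - 2 * ⟪x, y⟫ + ‖y‖ ^ 2 := norm_sub_sq_real x y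
  rw [Real.norm_eq_abs]
  rw [abs_of_pos (by norm_num : (0:ℝ) < 1/2)]
  rw [mul_pow]
  linarith

open Metric in
/-- a proper lower semicontinuous paraconvex function is `Φ_lsc`-subdifferentiable
at every interior point of its domain. -/
theorem stmt_7 {X : Type*} [NormedAddCommGroup X] [InnerProductSpace ℝ X] [CompleteSpace X]
    (f : X → EReal) (hbot : ∀ x, f x ≠ ⊥)
    (hsupp : (PhiSupp f).Nonempty) (hdom : (PhiDom f).Nonempty)
    (hlsc : LowerSemicontinuous f) (hpara : ParaconvexOn f) :
    ∀ x ∈ interior (PhiDom f), (SubLscE f 0 x).Nonempty := by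
  intro xb hxb
  obtain ⟨C, hC, hpara'⟩ := hpara
  -- midpoint inequality
  have hmid : ∀ (x y : X) (px py : ℝ), f x ≤ (px : EReal) → f y ≤ (py : EReal) →
      f ((1/2 : ℝ) • x + (1/2 : ℝ) • y) ≤ (((px + py)/2 + C * ‖x - y‖ ^ 2 : ℝ) : EReal) := by
    intro x y px py hx hy
    have hxt : f x ≠ ⊤ := ne_top_of_le_ne_top (EReal.coe_ne_top px) hx
    have hyt : f y ≠ ⊤ := ne_top_of_le_ne_top (EReal.coe_ne_top py) hy
    have hrx : f x = ((f x).toReal : EReal) := (EReal.coe_toReal hxt (hbot x)).symm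
    have hry : f y = ((f y).toReal : EReal) := (EReal.coe_toReal hyt (hbot y)).symm
    have hrxle : (f x).toReal ≤ px := by rw [hrx] at hx; exact_mod_cast hx
    have hryle : (f y).toReal ≤ py := by rw [hry] at hy; exact_mod_cast hy
    have h := hpara' x y (1/2) ⟨by norm_num, by norm_num⟩
    have hpteq : (1/2 : ℝ) • x + (1 - (1/2 : ℝ)) • y = (1/2 : ℝ) • x + (1/2 : ℝ) • y := by
      norm_num
    rw [hpteq, hrx, hry] at h
    calc f ((1/2 : ℝ) • x + (1/2 : ℝ) • y)
        ≤ ((1/2 : ℝ) : EReal) * ((f x).toReal : EReal) +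
          ((1 - (1/2) : ℝ) : EReal) * ((f y).toReal : EReal) +
          ((C * ‖x - y‖ ^ 2 : ℝ) : EReal) := h
      _ = (((1/2) * (f x).toReal + (1 - 1/2) * (f y).toReal + C * ‖x - y‖ ^ 2 : ℝ) : EReal) := by
          rw [← EReal.coe_mul, ← EReal.coe_mul, ← EReal.coe_add, ← EReal.coe_add]
      _ ≤ _ := by rw [EReal.coe_le_coe_iff]; linarith
  -- a closed ball inside the interior of the domain
  obtain ⟨ε, hε, hballε⟩ := Metric.mem_nhds_iff.1 (isOpen_interior.mem_nhds hxb)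
  have hr0 : 0 < ε / 2 := by linarith
  have hKsub : closedBall xb (ε / 2) ⊆ {x | f x < ⊤} := by
    intro y hy
    have : y ∈ ball xb ε := lt_of_le_of_lt (mem_closedBall.1 hy) (by linarith)
    exact interior_subset (hballε this)
  obtain ⟨δ, hδpos, hδr0, M0, hub⟩ := aux_upper_bound f hbot hlsc hC hmid hr0 hKsub
  -- real values on the ball
  have hballdom : ∀ y ∈ ball xb δ, f y < ⊤ := by
    intro y hy
    apply hKsub
    rw [mem_closedBall]
    exact le_trans (le_of_lt (mem_ball.1 hy)) hδr0
  have hreal : ∀ y ∈ ball xb δ, f y = ((f y).toReal : EReal) := fun y hy =>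
    (EReal.coe_toReal (hballdom y hy).ne (hbot y)).symm
  have hxbball : xb ∈ ball xb δ := mem_ball_self hδpos
  set a : ℝ := 4 * C with ha
  set Freal : X → ℝ := fun z => (f z).toReal + a * ‖z‖ ^ 2 with hFreal
  have htoRle : ∀ y ∈ ball xb δ, (f y).toReal ≤ M0 := by
    intro y hy
    have := hub y hy
    rw [hreal y hy] at this
    exact_mod_cast this
  set M : ℝ := M0 + a * (‖xb‖ + δ) ^ 2 with hM
  have hFbd : ∀ y ∈ ball xb δ, Freal y ≤ M := by
    intro y hy
    have h1 := htoRle y hy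
    have h2 : ‖y‖ ≤ ‖xb‖ + δ := by
      have := norm_sub_norm_le y xb
      have h3 : ‖y - xb‖ < δ := by rw [← dist_eq_norm]; exact mem_ball.1 hy
      linarith
    have h4 : a * ‖y‖ ^ 2 ≤ a * (‖xb‖ + δ) ^ 2 := by
      apply mul_le_mul_of_nonneg_left _ (by linarith)
      nlinarith [norm_nonneg y]
    simp only [hFreal]
    linarith
  have hFmid : ∀ x ∈ ball xb δ, ∀ y ∈ ball xb δ,
      Freal ((1/2 : ℝ) • x + (1/2 : ℝ) • y) ≤ (Freal x + Freal y) / 2 := by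
    intro x hx y hy
    have hm := hmid x y _ _ (le_of_eq (hreal x hx)) (le_of_eq (hreal y hy))
    have hmb : (1/2 : ℝ) • x + (1/2 : ℝ) • y ∈ ball xb δ :=
      (convex_ball xb δ) hx hy (by norm_num) (by norm_num) (by norm_num)
    rw [hreal _ hmb] at hm
    have hm' : (f ((1/2 : ℝ) • x + (1/2 : ℝ) • y)).toReal ≤
        ((f x).toReal + (f y).toReal) / 2 + C * ‖x - y‖ ^ 2 := by exact_mod_cast hm
    have hni := aux_normid x y
    simp only [hFreal, ha]
    nlinarith [hm', hni]
  have hFconv := aux_midpoint_convexOn (convex_ball xb δ) hFbd hFmid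
  obtain ⟨v, hv⟩ := aux_exists_subgrad hδpos hFconv hFbd
  refine ⟨(a, v), by simp [ha]; linarith, ?_⟩
  intro x
  dsimp only
  set fb : ℝ := (f xb).toReal with hfb
  have hfbcoe : f xb = (fb : EReal) := hreal xb hxbball
  by_cases hxtop : f x = ⊤
  · rw [hxtop]; exact le_top
  · by_contra hlt
    push_neg at hlt
    have hxcoe : f x = (((f x).toReal : ℝ) : EReal) := (EReal.coe_toReal hxtop (hbot x)).symm
    rw [hfbcoe, hxcoe, ← EReal.coe_add, EReal.coe_lt_coe_iff] at hlt
    set d : X := x - xb with hd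
    -- the halving sequence
    have hseq : ∀ n : ℕ, ∃ g : ℝ, f (xb + ((1/2 : ℝ)^n) • d) = (g : EReal) ∧
        g + a * ‖xb + ((1/2 : ℝ)^n) • d‖ ^ 2 - fb - a * ‖xb‖ ^ 2 -
          ⟪v, (xb + ((1/2 : ℝ)^n) • d) - xb⟫ < 0 := by
      intro n
      induction n with
      | zero =>
        have e2 : xb + ((1/2 : ℝ)^0) • d - xb = d := by simp
        have e : xb + ((1/2 : ℝ)^0) • d = x := by simp [hd]
        refine ⟨(f x).toReal, ?_, ?_⟩
        · rw [e]; exact hxcoe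
        · rw [e2, e]; linarith
      | succ n ih =>
        obtain ⟨g, hg, hGg⟩ := ih
        set xn : X := xb + ((1/2 : ℝ)^n) • d with hxn
        have hxmid : (1/2 : ℝ) • xb + (1/2 : ℝ) • xn = xb + ((1/2 : ℝ)^(n+1)) • d := by
          rw [hxn, pow_succ]
          module
        have h1 := hmid xb xn fb g (le_of_eq hfbcoe) (le_of_eq hg)
        rw [hxmid] at h1
        have hnt : f (xb + ((1/2 : ℝ)^(n+1)) • d) ≠ ⊤ :=
          ne_top_of_le_ne_top (EReal.coe_ne_top _) h1
        refine ⟨(f (xb + ((1/2 : ℝ)^(n+1)) • d)).toReal,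
          (EReal.coe_toReal hnt (hbot _)).symm, ?_⟩
        have hle2 : (f (xb + ((1/2 : ℝ)^(n+1)) • d)).toReal ≤
            (fb + g) / 2 + C * ‖xb - xn‖ ^ 2 := by
          rw [(EReal.coe_toReal hnt (hbot _)).symm] at h1
          exact_mod_cast h1
        have hni := aux_normid xb xn
        rw [hxmid] at hni
        have hinner : ⟪v, (xb + ((1/2 : ℝ)^(n+1)) • d) - xb⟫ = (1/2) * ⟪v, xn - xb⟫ := by
          have harg : (xb + ((1/2 : ℝ)^(n+1)) • d) - xb = (1/2 : ℝ) • (xn - xb) := by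
            rw [hxn, pow_succ]
            module
          rw [harg, real_inner_smul_right]
        rw [hinner]
        simp only [ha] at hGg ⊢
        nlinarith [hle2, hni, hGg]
    -- choose n large
    obtain ⟨n, hn⟩ := exists_pow_lt_of_lt_one (div_pos hδpos
      (by positivity : (0:ℝ) < ‖d‖ + 1)) (by norm_num : (1/2 : ℝ) < 1)
    obtain ⟨g, hg, hGg⟩ := hseq n
    set xn : X := xb + ((1/2 : ℝ)^n) • d with hxn
    have hxnball : xn ∈ ball xb δ := by
      rw [mem_ball, dist_eq_norm, hxn, add_sub_cancel_left, norm_smul, Real.norm_eq_abs,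
        abs_of_pos (by positivity : (0:ℝ) < (1/2 : ℝ)^n)]
      have hpow : (0:ℝ) < (1/2 : ℝ)^n := by positivity
      have h5 : (1/2 : ℝ)^n * (‖d‖ + 1) < δ := by
        rw [← lt_div_iff₀ (by positivity : (0:ℝ) < ‖d‖ + 1)]
        exact hn
      nlinarith [norm_nonneg d]
    have hsg := hv xn hxnball
    have hg' : (f xn).toReal = g := by rw [hg]; simp
    simp only [hFreal] at hsg
    rw [hg'] at hsg
    have hfbR : (f xb).toReal = fb := rfl
    rw [hfbR] at hsg
    linarith
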